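/- Suppose nonnegative-coefficient polynomials α_A, β_A, γ_A, δ_A and α_B, β_B, γ_B, δ_B satisfy, for S ∈ {A, B}: 0 ≤ x(β_S − α_S) ≤ δ_S − γ_S (coefficient-wise) and 0 ≤ α_S ≤ β_S ≤ γ_S ≤ δ_S (coefficient-wise). Then x·β_A·β_B + γ_A·γ_B ≤ x·α_A·α_B + δ_A·δ_B coefficient-wise. -/
import Mathlib


open Polynomial

lemma coeff_mul_le_of_le (p p' q q' : Polynomial ℤ)
    (hp : ∀ n, 0 ≤ p.coeff n ∧ p.coeff n ≤ p'.coeff n)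
    (hq : ∀ n, 0 ≤ q.coeff n ∧ q.coeff n ≤ q'.coeff n) :
    ∀ n, (p * q).coeff n ≤ (p' * q').coeff n := by
  intro n
  rw [coeff_mul, coeff_mul]
  apply Finset.sum_le_sum
  intro i _
  exact mul_le_mul (hp i.1).2 (hq i.2).2 (hq i.2).1 (le_trans (hp i.1).1 (hp i.1).2)

/-- the key coefficient-wise polynomial inequality for the ordinal-sum step. -/
theorem key_polynomial_inequality (aA bA cA dA aB bB cB dB : Polynomial ℤ)
    (hposA : ∀ n, 0 ≤ aA.coeff n ∧ 0 ≤ bA.coeff n ∧ 0 ≤ cA.coeff n ∧ 0 ≤ dA.coeff n)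
    (hposB : ∀ n, 0 ≤ aB.coeff n ∧ 0 ≤ bB.coeff n ∧ 0 ≤ cB.coeff n ∧ 0 ≤ dB.coeff n)
    (h1A : ∀ n, 0 ≤ (X * (bA - aA)).coeff n ∧ (X * (bA - aA)).coeff n ≤ (dA - cA).coeff n)
    (h1B : ∀ n, 0 ≤ (X * (bB - aB)).coeff n ∧ (X * (bB - aB)).coeff n ≤ (dB - cB).coeff n)
    (h2A : ∀ n, aA.coeff n ≤ bA.coeff n ∧ bA.coeff n ≤ cA.coeff n ∧ cA.coeff n ≤ dA.coeff n)
    (h2B : ∀ n, aB.coeff n ≤ bB.coeff n ∧ bB.coeff n ≤ cB.coeff n ∧ cB.coeff n ≤ dB.coeff n) :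
    ∀ n, (X * bA * bB + cA * cB).coeff n ≤ (X * aA * aB + dA * dB).coeff n := by
  intro n
  have key1 : ∀ m, (aA * (X * (bB - aB))).coeff m ≤ (cA * (dB - cB)).coeff m := by
    apply coeff_mul_le_of_le
    · intro m
      exact ⟨(hposA m).1, le_trans (h2A m).1 (h2A m).2.1⟩
    · exact h1B
  have key2 : ∀ m, ((X * (bA - aA)) * bB).coeff m ≤ ((dA - cA) * dB).coeff m := by
    apply coeff_mul_le_of_le
    · exact h1A
    · intro m
      exact ⟨(hposB m).2.1, le_trans (h2B m).2.1 (h2B m).2.2⟩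
  have hid : X * aA * aB + dA * dB =
      X * bA * bB + cA * cB + (cA * (dB - cB) - aA * (X * (bB - aB)))
        + ((dA - cA) * dB - (X * (bA - aA)) * bB) := by ring
  have := key1 n
  have := key2 n
  rw [hid]
  simp only [coeff_add, coeff_sub]
  linarith
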